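/- Let G be a group, let S ⊆ G be a generating set with S = S⁻¹, let ε > 0, and let wt : S → ℝ be a weight function with wt(s) = wt(s⁻¹) ≥ ε for all s ∈ S whose image wt(S) is a closed, discrete subset of ℝ. For g ∈ G let ℓ_wt(g) be the infimum, over all finite tuples (s_1,…,s_k) of elements of S with s_1 s_2 ⋯ s_k = g, of the total weight wt(s_1) + ⋯ + wt(s_k). Then for every g ∈ G this infimum is attained: there exists a tuple (s_1,…,s_k) with s_1 ⋯ s_k = g and wt(s_1) + ⋯ + wt(s_k) = ℓ_wt(g). -/

import Mathlib

private lemma sums_finite_aux {K : Set ℝ} (hK : K.Finite) (N : ℕ) :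
    {c : ℝ | ∃ m : List ℝ, (∀ x ∈ m, x ∈ K) ∧ m.length ≤ N ∧ m.sum = c}.Finite := by
  have : Finite ↥K := hK.to_subtype
  have hfin : {m : List ↥K | m.length ≤ N}.Finite := List.finite_length_le _ N
  apply Set.Finite.subset (hfin.image (fun m => (m.map (Subtype.val : ↥K → ℝ)).sum))
  rintro c ⟨m, hmK, hmlen, rfl⟩
  refine ⟨m.pmap (fun x hx => (⟨x, hx⟩ : ↥K)) hmK, by simpa using hmlen, ?_⟩
  simp [List.map_pmap, List.pmap_eq_map]

private lemma len_mul_le_sum {ε : ℝ} : ∀ {m : List ℝ}, (∀ x ∈ m, ε ≤ x) →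
    ε * m.length ≤ m.sum := by
  intro m
  induction m with
  | nil => simp
  | cons a t ih =>
    intro h
    simp only [List.length_cons, List.sum_cons, Nat.cast_add, Nat.cast_one]
    have h1 := ih (fun x hx => h x (List.mem_cons_of_mem a hx))
    have h2 := h a List.mem_cons_self
    nlinarith

/-- Let `S` be a symmetric generating set of a group `G` equipped with a weight function
`wt` whose values on `S` are bounded below by some `ε > 0` and form a closed discrete subset
of `ℝ`.  Then for every `g ∈ G` the infimum of the total weights of words in `S` representing
`g` is attained by an actual word. -/
theorem weighted_length_attained {G : Type*} [Group G] (S : Set G)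
    (hgen : Subgroup.closure S = ⊤)
    (hsymm : ∀ s ∈ S, s⁻¹ ∈ S)
    (ε : ℝ) (hε : 0 < ε)
    (wt : G → ℝ)
    (hwt_symm : ∀ s ∈ S, wt s⁻¹ = wt s)
    (hwt_ge : ∀ s ∈ S, ε ≤ wt s)
    (hclosed : IsClosed (wt '' S))
    (hdiscrete : DiscreteTopology ↥(wt '' S)) :
    ∀ g : G, ∃ l : List G, (∀ x ∈ l, x ∈ S) ∧ l.prod = g ∧
      (l.map wt).sum =
        sInf {c : ℝ | ∃ l' : List G, (∀ x ∈ l', x ∈ S) ∧ l'.prod = g ∧ (l'.map wt).sum = c} := by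
  intro g
  have hg : g ∈ Subgroup.closure S := by rw [hgen]; exact Subgroup.mem_top g
  have hrep : ∃ l : List G, (∀ x ∈ l, x ∈ S) ∧ l.prod = g := by
    induction hg using Subgroup.closure_induction with
    | mem x hx => exact ⟨[x], by simpa using hx, by simp⟩
    | one => exact ⟨[], by simp, by simp⟩
    | mul x y _ _ ihx ihy =>
      obtain ⟨l1, h1, h1p⟩ := ihx
      obtain ⟨l2, h2, h2p⟩ := ihy
      exact ⟨l1 ++ l2, by intro z hz; rcases List.mem_append.1 hz with h | h
                          exacts [h1 z h, h2 z h], by simp [h1p, h2p]⟩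
    | inv x _ ihx =>
      obtain ⟨l, h1, h1p⟩ := ihx
      refine ⟨(l.map Inv.inv).reverse, ?_, ?_⟩
      · intro z hz
        simp only [List.mem_reverse, List.mem_map] at hz
        obtain ⟨a, ha, rfl⟩ := hz
        exact hsymm a (h1 a ha)
      · rw [← h1p, List.prod_inv_reverse]
  obtain ⟨l0, hl0, hl0p⟩ := hrep
  set T := {c : ℝ | ∃ l' : List G, (∀ x ∈ l', x ∈ S) ∧ l'.prod = g ∧ (l'.map wt).sum = c} with hTdef
  have hc0 : (l0.map wt).sum ∈ T := ⟨l0, hl0, hl0p, rfl⟩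
  set c0 := (l0.map wt).sum with hc0def
  have hTne : T.Nonempty := ⟨c0, hc0⟩
  -- lower bound on sums of weights
  have key : ∀ l : List G, (∀ x ∈ l, x ∈ S) → ε * (l.map wt).length ≤ (l.map wt).sum := by
    intro l hl
    apply len_mul_le_sum
    intro x hx
    obtain ⟨a, ha, rfl⟩ := List.mem_map.1 hx
    exact hwt_ge a (hl a ha)
  have hbdd : BddBelow T := by
    refine ⟨0, ?_⟩
    rintro c ⟨l, hl, -, rfl⟩
    have h1 := key l hl
    have h2 : (0:ℝ) ≤ ε * (l.map wt).length := by positivity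
    linarith
  -- the truncated set
  set K : Set ℝ := (wt '' S) ∩ Set.Icc ε c0 with hKdef
  have hKcompact : IsCompact K := isCompact_Icc.inter_left hclosed
  have hKdisc : DiscreteTopology ↥K :=
    DiscreteTopology.of_subset hdiscrete Set.inter_subset_left
  have hKfin : K.Finite := hKcompact.finite (isDiscrete_iff_discreteTopology.mpr hKdisc)
  set N := ⌊c0 / ε⌋₊ with hNdef
  set T' := T ∩ Set.Iic c0 with hT'def
  have hT'ne : T'.Nonempty := ⟨c0, hc0, le_refl c0⟩
  have hT'fin : T'.Finite := by
    apply Set.Finite.subset (sums_finite_aux hKfin N)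
    rintro c ⟨⟨l, hl, -, rfl⟩, hle⟩
    rw [Set.mem_Iic] at hle
    refine ⟨l.map wt, ?_, ?_, rfl⟩
    · intro x hx
      obtain ⟨a, ha, rfl⟩ := List.mem_map.1 hx
      have hx1 : ε ≤ wt a := hwt_ge a (hl a ha)
      have hx2 : wt a ≤ (l.map wt).sum := by
        apply List.single_le_sum _ _ hx
        intro y hy
        obtain ⟨b, hb, rfl⟩ := List.mem_map.1 hy
        exact le_trans hε.le (hwt_ge b (hl b hb))
      exact ⟨⟨a, hl a ha, rfl⟩, hx1, hx2.trans hle⟩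
    · have h1 := key l hl
      rw [hNdef]
      apply Nat.le_floor
      rw [le_div_iff₀ hε, mul_comm]
      linarith
  have hmem : sInf T' ∈ T' := hT'ne.csInf_mem hT'fin
  have hEq : sInf T = sInf T' := by
    apply le_antisymm
    · exact csInf_le hbdd hmem.1
    · apply le_csInf hTne
      intro t ht
      by_cases h : t ≤ c0
      · exact csInf_le hT'fin.bddBelow ⟨ht, h⟩
      · have : sInf T' ≤ c0 := csInf_le hT'fin.bddBelow ⟨hc0, le_refl c0⟩
        linarith
  obtain ⟨l, h1, h2, h3⟩ := hmem.1
  exact ⟨l, h1, h2, by rw [h3, hEq]⟩
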